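/- arXiv:1909.05887 — 2 statements merged into one kernel-verified Lean document; each statement's English description precedes it below -/
import Mathlib

section
/- For a finite set of cardinality n and any j with 1 ≤ j ≤ n, the number of idempotent functions f on the set whose fixed point set has exactly j elements is C(n, j) · j^(n−j). -/
theorem card_idempotent_with_fix_card {S : Type*} [Fintype S] {n j : ℕ}
    (hcard : Fintype.card S = n) (hj1 : 1 ≤ j) (hjn : j ≤ n) :
    Nat.card {f : S → S // f ∘ f = f ∧ Set.ncard {x | f x = x} = j} =
      Nat.choose n j * j ^ (n - j) := by
  classical
  subst hcard
  have hpred : ∀ f : S → S,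
      Set.ncard {x | f x = x} = (Finset.univ.filter (fun x => f x = x)).card := by
    intro f
    rw [Set.ncard_eq_toFinset_card', Set.toFinset_setOf]
  rw [Nat.card_eq_fintype_card]
  have h1 : Fintype.card {f : S → S // f ∘ f = f ∧ Set.ncard {x | f x = x} = j}
      = (Finset.univ.filter (fun f : S → S =>
          f ∘ f = f ∧ (Finset.univ.filter (fun x => f x = x)).card = j)).card := by
    rw [Fintype.card_subtype]
    congr 1
    ext f
    simp [hpred f]
  rw [h1]
  rw [Finset.card_eq_sum_card_fiberwise
    (f := fun f : S → S => Finset.univ.filter (fun x => f x = x))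
    (t := Finset.univ.powersetCard j)
    (by
      intro f hf
      simp only [Finset.mem_coe, Finset.mem_filter, Finset.mem_univ, true_and] at hf
      exact Finset.mem_powersetCard.2 ⟨Finset.subset_univ _, hf.2⟩)]
  have key : ∀ T : Finset S, T.card = j →
      (Finset.univ.filter (fun f : S → S =>
        f ∘ f = f ∧ Finset.univ.filter (fun x => f x = x) = T)).card
        = j ^ (Fintype.card S - j) := by
    intro T hT
    rw [← Fintype.card_subtype]
    have e : {f : S → S // f ∘ f = f ∧ Finset.univ.filter (fun x => f x = x) = T}
        ≃ ((↥(Tᶜ : Finset S)) → ↥T) :=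
      { toFun := fun f => fun x => ⟨f.1 x.1, by
          have h2 : f.1 (f.1 x.1) = f.1 x.1 := congrFun f.2.1 x.1
          have hm : f.1 x.1 ∈ Finset.univ.filter (fun y => f.1 y = y) := by
            simp [h2]
          rwa [f.2.2] at hm⟩,
        invFun := fun p => ⟨fun x => if h : x ∈ T then x
            else ((p ⟨x, Finset.mem_compl.2 h⟩ : ↥T) : S), by
          constructor
          · funext x
            simp only [Function.comp_apply]
            by_cases h : x ∈ T
            · simp [h]
            · have hm : ((p ⟨x, Finset.mem_compl.2 h⟩ : ↥T) : S) ∈ T :=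
                (p ⟨x, Finset.mem_compl.2 h⟩).2
              simp [h, hm]
          · ext x
            simp only [Finset.mem_filter, Finset.mem_univ, true_and]
            by_cases h : x ∈ T
            · simp [h]
            · simp only [h, dif_neg, iff_false, not_false_iff]
              intro hx
              exact h (hx ▸ (p ⟨x, Finset.mem_compl.2 h⟩).2)⟩,
        left_inv := fun f => by
          apply Subtype.ext
          funext x
          by_cases h : x ∈ T
          · have hfx : f.1 x = x := by
              have hx : x ∈ Finset.univ.filter (fun y => f.1 y = y) := by
                rw [f.2.2]; exact h
              simpa using hx
            simp [h, hfx]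
          · simp [h],
        right_inv := fun p => by
          funext x
          apply Subtype.ext
          have hx : x.1 ∉ T := Finset.mem_compl.1 x.2
          simp [hx] }
    rw [Fintype.card_congr e, Fintype.card_fun, Fintype.card_coe, Fintype.card_coe,
      Finset.card_compl, hT]
  have hsum : ∀ T ∈ Finset.univ.powersetCard j,
      ((Finset.univ.filter (fun f : S → S =>
          f ∘ f = f ∧ (Finset.univ.filter (fun x => f x = x)).card = j)).filter
        (fun f => Finset.univ.filter (fun x => f x = x) = T)).card
        = j ^ (Fintype.card S - j) := by
    intro T hT
    have hTc : T.card = j := (Finset.mem_powersetCard.1 hT).2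
    rw [Finset.filter_filter]
    have heq : (Finset.univ.filter (fun f : S → S =>
        (f ∘ f = f ∧ (Finset.univ.filter (fun x => f x = x)).card = j) ∧
          Finset.univ.filter (fun x => f x = x) = T))
        = (Finset.univ.filter (fun f : S → S =>
        f ∘ f = f ∧ Finset.univ.filter (fun x => f x = x) = T)) := by
      ext f
      simp only [Finset.mem_filter, Finset.mem_univ, true_and]
      constructor
      · rintro ⟨⟨h1, _⟩, h3⟩; exact ⟨h1, h3⟩
      · rintro ⟨h1, h3⟩; exact ⟨⟨h1, h3 ▸ hTc⟩, h3⟩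
    rw [heq, key T hTc]
  rw [Finset.sum_congr rfl hsum, Finset.sum_const, Finset.card_powersetCard,
    Finset.card_univ, smul_eq_mul]
end

section
/- The number of idempotent functions on a finite set of cardinality n ≥ 1 equals the sum over j from 1 to n of C(n, j) · j^(n−j). -/
open Finset

/-- Build an idempotent function from a finset `T` and a map from the complement into `T`. -/
def mkIdem {S : Type*} [DecidableEq S] (T : Finset S)
    (g : {x : S // x ∉ T} → {x : S // x ∈ T}) : S → S :=
  fun x => if h : x ∈ T then x else (g ⟨x, h⟩ : S)

lemma mkIdem_idem {S : Type*} [DecidableEq S] (T : Finset S)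
    (g : {x : S // x ∉ T} → {x : S // x ∈ T}) :
    mkIdem T g ∘ mkIdem T g = mkIdem T g := by
  funext x
  simp only [Function.comp, mkIdem]
  by_cases h : x ∈ T
  · simp only [dif_pos h]
  · simp only [dif_neg h, dif_pos (g ⟨x, h⟩).2]

lemma mkIdem_fixed {S : Type*} [DecidableEq S] (T : Finset S)
    (g : {x : S // x ∉ T} → {x : S // x ∈ T}) (x : S) :
    mkIdem T g x = x ↔ x ∈ T := by
  constructor
  · intro h
    by_contra hx
    have : mkIdem T g x = (g ⟨x, hx⟩ : S) := dif_neg hx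
    rw [h] at this
    exact hx (this ▸ (g ⟨x, hx⟩).2)
  · intro h; exact dif_pos h

lemma mkIdem_bijective {S : Type*} [DecidableEq S] [Fintype S] :
    Function.Bijective
      (fun p : Σ T : Finset S, ({x : S // x ∉ T} → {x : S // x ∈ T}) =>
        (⟨mkIdem p.1 p.2, mkIdem_idem p.1 p.2⟩ : {f : S → S // f ∘ f = f})) := by
  constructor
  · rintro ⟨T, g⟩ ⟨T', g'⟩ h
    simp only [Subtype.mk.injEq] at h
    obtain rfl : T = T' := by
      ext x
      rw [← mkIdem_fixed T g x, ← mkIdem_fixed T' g' x, h]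
    congr 1
    funext x
    have := congrFun h x
    simp only [mkIdem, dif_neg x.2] at this
    exact Subtype.ext this
  · rintro ⟨f, hf⟩
    classical
    refine ⟨⟨univ.filter (fun x => f x = x),
      fun x => ⟨f x, by simpa using congrFun hf x.1⟩⟩, ?_⟩
    ext x
    simp only [mkIdem]
    split_ifs with h
    · simp only [mem_filter] at h
      exact h.2.symm
    · rfl

theorem card_idempotent {S : Type*} [Fintype S] {n : ℕ}
    (hcard : Fintype.card S = n) (hn : 1 ≤ n) :
    Nat.card {f : S → S // f ∘ f = f} =
      ∑ j ∈ Finset.Icc 1 n, Nat.choose n j * j ^ (n - j) := by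
  classical
  rw [Nat.card_eq_fintype_card,
    ← Fintype.card_of_bijective (mkIdem_bijective (S := S))]
  rw [Fintype.card_sigma]
  have key : ∀ T : Finset S,
      Fintype.card ({x : S // x ∉ T} → {x : S // x ∈ T}) = T.card ^ (n - T.card) := by
    intro T
    rw [Fintype.card_fun, Fintype.card_coe]
    congr 1
    rw [Fintype.card_subtype]
    have : (univ.filter (fun x => x ∉ T)) = Tᶜ := by ext x; simp
    rw [this, card_compl, hcard]
  simp_rw [key]
  have huniv : (univ : Finset (Finset S)) = (univ : Finset S).powerset := by
    ext T; simp
  rw [huniv, Finset.sum_powerset, card_univ, hcard]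
  have hsplit : Finset.range (n + 1) = insert 0 (Finset.Icc 1 n) := by
    ext j
    simp [Nat.lt_succ_iff, Nat.one_le_iff_ne_zero]
    omega
  rw [hsplit, Finset.sum_insert (by simp)]
  have h0 : ∑ t ∈ powersetCard 0 (univ : Finset S), t.card ^ (n - t.card) = 0 := by
    simp [powersetCard_zero, Nat.zero_pow (show 0 < n by omega)]
  rw [h0, zero_add]
  apply Finset.sum_congr rfl
  intro j hj
  simp only [mem_Icc] at hj
  have : ∀ t ∈ powersetCard j (univ : Finset S), t.card ^ (n - t.card) = j ^ (n - j) := by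
    intro t ht
    rw [(mem_powersetCard.1 ht).2]
  rw [Finset.sum_congr rfl this, Finset.sum_const, card_powersetCard, card_univ, hcard,
    smul_eq_mul]
end
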